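/- arXiv:2305.05637 — 2 statements merged into one kernel-verified Lean document; each statement's English description precedes it below -/
import Mathlib

section
/- Suppose R ⊆ (𝕋ⁿ)² consists of signed pairs and satisfies conditions (a) and (b) of the definition of a signed bend cone (it contains all pairs (x⁺,(−∞,…,−∞)) and is stable under tropical scalar multiplication). Then R satisfies conditions (c) and (d) of that definition if and only if R is stable under the operation x ⊕̂^∨ y := (x ⊕̂ y)^∨, where, with I = {i : x⁻_i = y⁺_i}, x ⊕̂ y = (x⁺ ⊕ y⁺_{\setminus I}, x⁻_{\setminus I} ⊕ y⁻) and z_{\setminus I} denotes z with all coordinates in I replaced by −∞. -/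
/-- The tropical (max-plus) semiring 𝕋 = ℝ ∪ {−∞}, modeled as `WithBot ℝ`. -/
abbrev Trop : Type := WithBot ℝ

/-- The map 𝕋 → ℝ, x ↦ eˣ (with e^{−∞} = 0), inducing the metric
d(x,y) = |eˣ − e^y| on 𝕋. -/
noncomputable def tropExp : Trop → ℝ := WithBot.recBotCoe (0 : ℝ) Real.exp

/-- The topology on 𝕋 induced by the metric d(x,y) = |eˣ − e^y|. -/
noncomputable instance : TopologicalSpace Trop :=
  TopologicalSpace.induced tropExp inferInstance

/-- A pair of vectors (x⁺, x⁻) ∈ (𝕋ⁿ)² is signed if, for every coordinate i,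
x⁺_i = −∞ or x⁻_i = −∞. -/
def SignedVecPair {n : ℕ} (x : (Fin n → Trop) × (Fin n → Trop)) : Prop :=
  ∀ i, x.1 i = ⊥ ∨ x.2 i = ⊥

/-- Tropical scalar product of vectors: ⟨x,y⟩ = max_i (x_i + y_i). -/
noncomputable def tdot {n : ℕ} (x y : Fin n → Trop) : Trop :=
  Finset.univ.sup fun i => x i + y i

/-- The "signed part" f^∨ of a pair of vectors f = (f⁺, f⁻):
f^{∨+}_i = f⁺_i if f⁺_i ≥ f⁻_i and −∞ otherwise;
f^{∨−}_i = f⁻_i if f⁻_i > f⁺_i and −∞ otherwise. -/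
noncomputable def vee {n : ℕ} (f : (Fin n → Trop) × (Fin n → Trop)) :
    (Fin n → Trop) × (Fin n → Trop) :=
  (fun i => if f.2 i ≤ f.1 i then f.1 i else ⊥,
   fun i => if f.1 i < f.2 i then f.2 i else ⊥)

/-- Tropical scalar action: (λ ⊙ f)_i = λ + f_i. -/
noncomputable def tsmul {n : ℕ} (l : Trop) (f : Fin n → Trop) : Fin n → Trop :=
  fun i => l + f i

/-- A monotone pre-congruence C ⊆ (𝕋ⁿ)²: stable by tropical scalar multiplication,
by componentwise max, by "transitivity" (f⁻ = g⁺ implies (f⁺,g⁻) ∈ C), and containing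
every pair (f⁺,f⁻) with f⁺ ≥ f⁻. -/
structure IsMonotonePrecongruence {n : ℕ} (C : Set ((Fin n → Trop) × (Fin n → Trop))) : Prop where
  smul_mem : ∀ f ∈ C, ∀ l : Trop, (tsmul l f.1, tsmul l f.2) ∈ C
  add_mem : ∀ f ∈ C, ∀ g ∈ C, (f.1 ⊔ g.1, f.2 ⊔ g.2) ∈ C
  trans_mem : ∀ f ∈ C, ∀ g ∈ C, f.2 = g.1 → (f.1, g.2) ∈ C
  monotone_mem : ∀ f : (Fin n → Trop) × (Fin n → Trop), f.2 ≤ f.1 → f ∈ C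

/-- The pair x ⊕_i y = (x⁺ ⊕ y⁺_{∖i}, x⁻_{∖i} ⊕ y⁻), where z_{∖i} is z with
coordinate i replaced by −∞. -/
noncomputable def oplusI {n : ℕ} (i : Fin n)
    (x y : (Fin n → Trop) × (Fin n → Trop)) : (Fin n → Trop) × (Fin n → Trop) :=
  (x.1 ⊔ Function.update y.1 i ⊥, Function.update x.2 i ⊥ ⊔ y.2)

/-- A signed bend cone R ⊆ (𝕋ⁿ)²: all elements are signed pairs, R contains all
pairs (x⁺, −∞), is stable by tropical scalar multiplication, and is stable under
the operations x, y ↦ (x ⊕ y)^∨ and x, y ↦ (x ⊕_i y)^∨ (the latter when x⁻_i = y⁺_i). -/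
structure IsSignedBendCone {n : ℕ} (R : Set ((Fin n → Trop) × (Fin n → Trop))) : Prop where
  signed : ∀ x ∈ R, SignedVecPair x
  pos_mem : ∀ xp : Fin n → Trop, (xp, fun _ => (⊥ : Trop)) ∈ R
  smul_mem : ∀ x ∈ R, ∀ l : Trop, (tsmul l x.1, tsmul l x.2) ∈ R
  add_vee_mem : ∀ x ∈ R, ∀ y ∈ R, vee (x.1 ⊔ y.1, x.2 ⊔ y.2) ∈ R
  addI_vee_mem : ∀ x ∈ R, ∀ y ∈ R, ∀ i : Fin n, x.2 i = y.1 i → vee (oplusI i x y) ∈ R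

/-- The one-sided polar B^⊲ = {a ∈ 𝕋ⁿ : ⟨x⁺,a⟩ ≥ ⟨x⁻,a⟩ for all (x⁺,x⁻) ∈ B}. -/
def onePolar {n : ℕ} (B : Set ((Fin n → Trop) × (Fin n → Trop))) : Set (Fin n → Trop) :=
  {a | ∀ x ∈ B, tdot x.2 a ≤ tdot x.1 a}

/-- The signed part C^∨ of a set C ⊆ (𝕋ⁿ)²: the signed pairs belonging to C. -/
def signedPart {n : ℕ} (C : Set ((Fin n → Trop) × (Fin n → Trop))) :
    Set ((Fin n → Trop) × (Fin n → Trop)) :=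
  {x ∈ C | SignedVecPair x}

/-- The signed polar A° of A ⊆ 𝕋ⁿ : the set of signed pairs (x⁺,x⁻) with
⟨x⁺,a⟩ ≥ ⟨x⁻,a⟩ for all a ∈ A. -/
def signedPolar {n : ℕ} (A : Set (Fin n → Trop)) :
    Set ((Fin n → Trop) × (Fin n → Trop)) :=
  {x | SignedVecPair x ∧ ∀ a ∈ A, tdot x.2 a ≤ tdot x.1 a}

/-- The pair x ⊕̂ y = (x⁺ ⊕ y⁺_{∖I}, x⁻_{∖I} ⊕ y⁻), where I = {i : x⁻_i = y⁺_i}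
and z_{∖I} is z with all coordinates in I replaced by −∞. -/
noncomputable def hatOplus {n : ℕ} (x y : (Fin n → Trop) × (Fin n → Trop)) :
    (Fin n → Trop) × (Fin n → Trop) :=
  (x.1 ⊔ fun i => if x.2 i = y.1 i then ⊥ else y.1 i,
   (fun i => if x.2 i = y.1 i then ⊥ else x.2 i) ⊔ y.2)

noncomputable def sv (p q : Trop) : Trop × Trop :=
  (if q ≤ p then p else ⊥, if p < q then q else ⊥)

lemma sv_bot_right (p : Trop) : sv p ⊥ = (p, ⊥) := by
  simp [sv, not_lt_bot]

lemma sv_bot_left (q : Trop) : sv ⊥ q = (⊥, q) := by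
  rcases eq_or_ne q ⊥ with h | h
  · simp [sv, h]
  · simp [sv, h, bot_lt_iff_ne_bot.2 h, le_bot_iff]

lemma sv_absorb (a b p q : Trop) :
    sv (a ⊔ (sv p q).1) ((sv p q).2 ⊔ b) = sv (a ⊔ p) (q ⊔ b) := by
  simp only [sv]
  rcases le_or_gt q p with h | h
  · simp only [if_pos h, if_neg (not_lt.2 h), bot_sup_eq]
    rcases le_or_gt q b with hb | hb
    · rw [sup_eq_right.2 hb]
    · have h1 : b ≤ a ⊔ p := le_trans hb.le (le_trans h le_sup_right)
      have h2 : q ⊔ b ≤ a ⊔ p := sup_le (le_trans h le_sup_right) h1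
      rw [if_pos h1, if_pos h2, if_neg (not_lt.2 h1), if_neg (not_lt.2 h2)]
  · simp only [if_neg (not_le.2 h), if_pos h, sup_bot_eq]
    rcases le_or_gt p a with ha | ha
    · rw [sup_eq_left.2 ha]
    · have h1 : a < q ⊔ b := lt_of_lt_of_le (ha.trans h) le_sup_left
      have h2 : a ⊔ p < q ⊔ b := sup_lt_iff.2 ⟨h1, lt_of_lt_of_le h le_sup_left⟩
      rw [if_neg (not_le.2 h1), if_neg (not_le.2 h2), if_pos h1, if_pos h2]

lemma sv_idem (p q : Trop) : sv (sv p q).1 (sv p q).2 = sv p q := by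
  have h := sv_absorb ⊥ ⊥ p q
  simpa using h

lemma sv_signed {p q : Trop} (h : p = ⊥ ∨ q = ⊥) : sv p q = (p, q) := by
  rcases h with h | h <;> rw [h] <;> [exact sv_bot_left q; exact sv_bot_right p]

lemma sv_cancel {p q r s : Trop} (hx : p = ⊥ ∨ q = ⊥) (hy : r = ⊥ ∨ s = ⊥) (h : q = r) :
    sv (q ⊔ p) s = sv (p ⊔ r) (q ⊔ s) := by
  subst h
  rcases eq_or_ne q ⊥ with hq | hq
  · subst hq; simp
  · have hp : p = ⊥ := hx.resolve_right hq
    have hs : s = ⊥ := hy.resolve_left hq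
    subst hp; subst hs
    simp [sv, le_refl, lt_irrefl]

lemma scalar_c (p q r s : Trop) (hx : p = ⊥ ∨ q = ⊥) (hy : r = ⊥ ∨ s = ⊥) :
    sv ((if q = r then q else ⊥) ⊔
        (sv (p ⊔ if q = r then ⊥ else r) ((if q = r then ⊥ else q) ⊔ s)).1)
       ((sv (p ⊔ if q = r then ⊥ else r) ((if q = r then ⊥ else q) ⊔ s)).2)
    = sv (p ⊔ r) (q ⊔ s) := by
  by_cases h : q = r
  · simp only [if_pos h, sup_bot_eq, bot_sup_eq]
    have h1 := sv_absorb q ⊥ p s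
    simp only [sup_bot_eq] at h1
    rw [h1]
    exact sv_cancel hx hy h
  · simp only [if_neg h]
    have h1 := sv_absorb ⊥ ⊥ (p ⊔ r) (q ⊔ s)
    simpa using h1


lemma vee_fst_apply {n : ℕ} (f : (Fin n → Trop) × (Fin n → Trop)) (i : Fin n) :
    (vee f).1 i = (sv (f.1 i) (f.2 i)).1 := rfl

lemma vee_snd_apply {n : ℕ} (f : (Fin n → Trop) × (Fin n → Trop)) (i : Fin n) :
    (vee f).2 i = (sv (f.1 i) (f.2 i)).2 := rfl

lemma vee_congr {n : ℕ} {f g : (Fin n → Trop) × (Fin n → Trop)}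
    (h : ∀ i, sv (f.1 i) (f.2 i) = sv (g.1 i) (g.2 i)) : vee f = vee g := by
  apply Prod.ext
  · funext i; exact congrArg Prod.fst (h i)
  · funext i; exact congrArg Prod.snd (h i)

lemma vee_of_signed {n : ℕ} {z : (Fin n → Trop) × (Fin n → Trop)}
    (h : SignedVecPair z) : vee z = z := by
  apply Prod.ext
  · funext i; rw [vee_fst_apply, sv_signed (h i)]
  · funext i; rw [vee_snd_apply, sv_signed (h i)]

section
variable {n : ℕ} {R : Set ((Fin n → Trop) × (Fin n → Trop))}

lemma posAdd (hpos : ∀ xp : Fin n → Trop, (xp, fun _ => (⊥ : Trop)) ∈ R)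
    (hhat : ∀ x ∈ R, ∀ y ∈ R, vee (hatOplus x y) ∈ R) :
    ∀ A ∈ R, ∀ w : Fin n → Trop, vee (w ⊔ A.1, A.2) ∈ R := by
  intro A hA w
  have h := hhat (w, fun _ => ⊥) (hpos w) A hA
  have e : hatOplus (w, fun _ => (⊥:Trop)) A = (w ⊔ A.1, A.2) := by
    apply Prod.ext
    · funext i
      show w i ⊔ (if (⊥:Trop) = A.1 i then ⊥ else A.1 i) = w i ⊔ A.1 i
      by_cases h' : (⊥:Trop) = A.1 i
      · rw [if_pos h', h']
      · rw [if_neg h']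
    · funext i
      show (if (⊥:Trop) = A.1 i then (⊥:Trop) else ⊥) ⊔ A.2 i = A.2 i
      simp
  rwa [e] at h

lemma hat_to_c (hsigned : ∀ x ∈ R, SignedVecPair x)
    (hpos : ∀ xp : Fin n → Trop, (xp, fun _ => (⊥ : Trop)) ∈ R)
    (hhat : ∀ x ∈ R, ∀ y ∈ R, vee (hatOplus x y) ∈ R) :
    ∀ x ∈ R, ∀ y ∈ R, vee (x.1 ⊔ y.1, x.2 ⊔ y.2) ∈ R := by
  intro x hx y hy
  have h := posAdd hpos hhat (vee (hatOplus x y)) (hhat x hx y hy)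
      (fun i => if x.2 i = y.1 i then x.2 i else ⊥)
  have e : vee ((fun i => if x.2 i = y.1 i then x.2 i else ⊥) ⊔ (vee (hatOplus x y)).1,
      (vee (hatOplus x y)).2) = vee (x.1 ⊔ y.1, x.2 ⊔ y.2) := by
    apply vee_congr
    intro i
    exact scalar_c (x.1 i) (x.2 i) (y.1 i) (y.2 i) (hsigned x hx i) (hsigned y hy i)
  rw [e] at h
  exact h
end

section
variable {n : ℕ} {R : Set ((Fin n → Trop) × (Fin n → Trop))}

lemma sv_idem' (p q : Trop) : sv (⊥ ⊔ (sv p q).1) ((sv p q).2) = sv p q := by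
  have h := sv_absorb ⊥ ⊥ p q
  simpa using h

lemma hat_to_d (hsigned : ∀ x ∈ R, SignedVecPair x)
    (hpos : ∀ xp : Fin n → Trop, (xp, fun _ => (⊥ : Trop)) ∈ R)
    (hhat : ∀ x ∈ R, ∀ y ∈ R, vee (hatOplus x y) ∈ R) :
    ∀ x ∈ R, ∀ y ∈ R, ∀ i : Fin n, x.2 i = y.1 i → vee (oplusI i x y) ∈ R := by
  intro x hx y hy i hxy
  have h := posAdd hpos hhat (vee (hatOplus x y)) (hhat x hx y hy)
      (fun j => if j = i then ⊥ else if x.2 j = y.1 j then x.2 j else ⊥)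
  have e : vee ((fun j => if j = i then (⊥:Trop) else if x.2 j = y.1 j then x.2 j else ⊥)
        ⊔ (vee (hatOplus x y)).1, (vee (hatOplus x y)).2) = vee (oplusI i x y) := by
    apply vee_congr
    intro j
    simp only [Pi.sup_apply, vee_fst_apply, vee_snd_apply, hatOplus, oplusI]
    by_cases hj : j = i
    · subst hj
      simp only [if_pos rfl, if_pos hxy, Function.update_self, bot_sup_eq, sup_bot_eq]
      exact sv_idem' _ _
    · simp only [if_neg hj, Function.update_of_ne hj, bot_sup_eq]
      exact scalar_c _ _ _ _ (hsigned x hx j) (hsigned y hy j)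
  rw [e] at h
  exact h
end

section
variable {n : ℕ} {R : Set ((Fin n → Trop) × (Fin n → Trop))}

lemma negKill (hsigned : ∀ x ∈ R, SignedVecPair x)
    (hpos : ∀ xp : Fin n → Trop, (xp, fun _ => (⊥ : Trop)) ∈ R)
    (hd : ∀ x ∈ R, ∀ y ∈ R, ∀ i : Fin n, x.2 i = y.1 i → vee (oplusI i x y) ∈ R) :
    ∀ z ∈ R, ∀ i : Fin n, (z.1, Function.update z.2 i ⊥) ∈ R := by
  intro z hz i
  have hcond : z.2 i = (fun j => if j = i then z.2 i else ⊥) i := by simp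
  have h := hd z hz (fun j => if j = i then z.2 i else ⊥, fun _ => ⊥) (hpos _) i hcond
  have e : oplusI i z ((fun j => if j = i then z.2 i else ⊥), fun _ => (⊥:Trop))
      = (z.1, Function.update z.2 i ⊥) := by
    apply Prod.ext
    · funext j
      show z.1 j ⊔ Function.update (fun j => if j = i then z.2 i else ⊥) i ⊥ j = z.1 j
      by_cases hj : j = i <;> simp [Function.update_apply, hj]
    · funext j
      show Function.update z.2 i ⊥ j ⊔ ⊥ = Function.update z.2 i ⊥ j
      simp
  rw [e] at h
  have hsgn : SignedVecPair (z.1, Function.update z.2 i ⊥) := by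
    intro j
    by_cases hj : j = i
    · subst hj; right; simp
    · simpa [Function.update_of_ne hj] using hsigned z hz j
  rwa [vee_of_signed hsgn] at h

lemma negKillSet (hsigned : ∀ x ∈ R, SignedVecPair x)
    (hpos : ∀ xp : Fin n → Trop, (xp, fun _ => (⊥ : Trop)) ∈ R)
    (hd : ∀ x ∈ R, ∀ y ∈ R, ∀ i : Fin n, x.2 i = y.1 i → vee (oplusI i x y) ∈ R) :
    ∀ z ∈ R, ∀ S : Finset (Fin n), (z.1, fun j => if j ∈ S then ⊥ else z.2 j) ∈ R := by
  intro z hz S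
  classical
  induction S using Finset.induction_on with
  | empty => simpa using hz
  | @insert a S ha IH =>
      have h := negKill hsigned hpos hd _ IH a
      have e : Function.update (fun j => if j ∈ S then (⊥:Trop) else z.2 j) a ⊥
          = fun j => if j ∈ insert a S then ⊥ else z.2 j := by
        funext j
        by_cases hj : j = a
        · subst hj; simp
        · simp [Function.update_of_ne hj, hj, Finset.mem_insert]
      rw [e] at h
      exact h
end

section
variable {n : ℕ} {R : Set ((Fin n → Trop) × (Fin n → Trop))}

lemma main_lemma (hsigned : ∀ x ∈ R, SignedVecPair x)
    (hpos : ∀ xp : Fin n → Trop, (xp, fun _ => (⊥ : Trop)) ∈ R)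
    (hc : ∀ x ∈ R, ∀ y ∈ R, vee (x.1 ⊔ y.1, x.2 ⊔ y.2) ∈ R)
    (hd : ∀ x ∈ R, ∀ y ∈ R, ∀ i : Fin n, x.2 i = y.1 i → vee (oplusI i x y) ∈ R) :
    ∀ S : Finset (Fin n), ∀ x ∈ R, ∀ y ∈ R,
      (∀ j ∈ S, x.2 j = y.1 j ∧ y.1 j ≠ ⊥) →
      vee (x.1 ⊔ fun j => if j ∈ S then ⊥ else y.1 j,
           (fun j => if j ∈ S then ⊥ else x.2 j) ⊔ y.2) ∈ R := by
  classical
  intro S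
  induction S using Finset.induction_on with
  | empty =>
      intro x hx y hy _
      simpa using hc x hx y hy
  | @insert a S ha IH =>
      intro x hx y hy hS
      have hxya : x.2 a = y.1 a := (hS a (Finset.mem_insert_self a S)).1
      have hnea : y.1 a ≠ ⊥ := (hS a (Finset.mem_insert_self a S)).2
      have hx1a : x.1 a = ⊥ := (hsigned x hx a).resolve_right (by rw [hxya]; exact hnea)
      have hy2a : y.2 a = ⊥ := (hsigned y hy a).resolve_left hnea
      have hA : (x.1, fun j => if j ∈ Finset.univ.erase a then ⊥ else x.2 j) ∈ R :=
        negKillSet hsigned hpos hd x hx _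
      have hy' := hd _ hA y hy a (by simpa using hxya)
      have ey : oplusI a (x.1, fun j => if j ∈ Finset.univ.erase a then (⊥:Trop) else x.2 j) y
          = (x.1 ⊔ Function.update y.1 a ⊥, y.2) := by
        apply Prod.ext
        · rfl
        · funext j
          show Function.update (fun j => if j ∈ Finset.univ.erase a then (⊥:Trop) else x.2 j) a ⊥ j
              ⊔ y.2 j = y.2 j
          by_cases hj : j = a
          · subst hj; simp
          · rw [Function.update_of_ne hj]; simp [Finset.mem_erase, hj]
      rw [ey] at hy'
      have hx' : (x.1, Function.update x.2 a ⊥) ∈ R := negKill hsigned hpos hd x hx a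
      have hyp : ∀ j ∈ S,
          (x.1, Function.update x.2 a ⊥).2 j = (vee (x.1 ⊔ Function.update y.1 a ⊥, y.2)).1 j ∧
          (vee (x.1 ⊔ Function.update y.1 a ⊥, y.2)).1 j ≠ ⊥ := by
        intro j hj
        have hja : j ≠ a := by rintro rfl; exact ha hj
        obtain ⟨hq, hr⟩ := hS j (Finset.mem_insert_of_mem hj)
        have hx1 : x.1 j = ⊥ := (hsigned x hx j).resolve_right (by rw [hq]; exact hr)
        have hy2 : y.2 j = ⊥ := (hsigned y hy j).resolve_left hr
        have e1 : (vee (x.1 ⊔ Function.update y.1 a ⊥, y.2)).1 j = y.1 j := by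
          rw [vee_fst_apply]
          show (sv ((x.1 ⊔ Function.update y.1 a ⊥) j) (y.2 j)).1 = y.1 j
          rw [Pi.sup_apply, Function.update_of_ne hja, hx1, hy2, bot_sup_eq, sv_bot_right]
        refine ⟨?_, by rw [e1]; exact hr⟩
        show Function.update x.2 a ⊥ j = _
        rw [Function.update_of_ne hja, e1]; exact hq
      have hB := IH (x.1, Function.update x.2 a ⊥) hx'
        (vee (x.1 ⊔ Function.update y.1 a ⊥, y.2)) hy' hyp
      have e : vee ((x.1, Function.update x.2 a ⊥).1
            ⊔ fun j => if j ∈ S then ⊥ else (vee (x.1 ⊔ Function.update y.1 a ⊥, y.2)).1 j,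
            (fun j => if j ∈ S then ⊥ else (x.1, Function.update x.2 a ⊥).2 j)
            ⊔ (vee (x.1 ⊔ Function.update y.1 a ⊥, y.2)).2)
          = vee (x.1 ⊔ fun j => if j ∈ insert a S then ⊥ else y.1 j,
            (fun j => if j ∈ insert a S then ⊥ else x.2 j) ⊔ y.2) := by
        apply vee_congr
        intro j
        simp only [Pi.sup_apply, vee_fst_apply, vee_snd_apply]
        by_cases hjS : j ∈ S
        · have hja : j ≠ a := by rintro rfl; exact ha hjS
          obtain ⟨hq, hr⟩ := hS j (Finset.mem_insert_of_mem hjS)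
          have hx1 : x.1 j = ⊥ := (hsigned x hx j).resolve_right (by rw [hq]; exact hr)
          have hy2 : y.2 j = ⊥ := (hsigned y hy j).resolve_left hr
          simp [hjS, Finset.mem_insert, hx1, hy2, sv_bot_right]
        · by_cases hja : j = a
          · subst hja
            simp [hjS, Finset.mem_insert, hx1a, hy2a, Function.update_self, sv_bot_right]
          · simp only [if_neg hjS, Finset.mem_insert, hja, false_or,
              Pi.sup_apply, Function.update_of_ne hja]
            rw [sup_comm (x.2 j) _, sv_absorb, ← sup_assoc, sup_idem, sup_comm (y.2 j) (x.2 j)]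
      rw [e] at hB
      exact hB
end


/-- For a set R of signed pairs containing all pairs (x⁺, −∞) and stable under
tropical scalar multiplication, conditions (c) and (d) of the definition of a
signed bend cone hold iff R is stable under the operation x, y ↦ (x ⊕̂ y)^∨. -/
theorem signedBendCone_conditions_iff_hatOplus {n : ℕ}
    (R : Set ((Fin n → Trop) × (Fin n → Trop)))
    (hsigned : ∀ x ∈ R, SignedVecPair x)
    (hpos : ∀ xp : Fin n → Trop, (xp, fun _ => (⊥ : Trop)) ∈ R)
    (hsmul : ∀ x ∈ R, ∀ l : Trop, (tsmul l x.1, tsmul l x.2) ∈ R) :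
    ((∀ x ∈ R, ∀ y ∈ R, vee (x.1 ⊔ y.1, x.2 ⊔ y.2) ∈ R) ∧
      (∀ x ∈ R, ∀ y ∈ R, ∀ i : Fin n, x.2 i = y.1 i → vee (oplusI i x y) ∈ R))
    ↔ (∀ x ∈ R, ∀ y ∈ R, vee (hatOplus x y) ∈ R) := by
  constructor
  · rintro ⟨hc, hd⟩ x hx y hy
    classical
    have h := main_lemma hsigned hpos hc hd
      (Finset.univ.filter (fun j => x.2 j = y.1 j ∧ y.1 j ≠ ⊥)) x hx y hy
      (by intro j hj; exact (Finset.mem_filter.1 hj).2)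
    have e : (x.1 ⊔ fun j => if j ∈ Finset.univ.filter (fun j => x.2 j = y.1 j ∧ y.1 j ≠ ⊥)
          then (⊥:Trop) else y.1 j,
        (fun j => if j ∈ Finset.univ.filter (fun j => x.2 j = y.1 j ∧ y.1 j ≠ ⊥)
          then (⊥:Trop) else x.2 j) ⊔ y.2) = hatOplus x y := by
      apply Prod.ext
      · funext j
        show x.1 j ⊔ _ = x.1 j ⊔ _
        by_cases hq : x.2 j = y.1 j
        · by_cases hb : y.1 j = ⊥ <;> simp [Finset.mem_filter, hq, hb]
        · simp [Finset.mem_filter, hq]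
      · funext j
        show (if _ then _ else _) ⊔ y.2 j = (if _ then _ else _) ⊔ y.2 j
        by_cases hq : x.2 j = y.1 j
        · by_cases hb : y.1 j = ⊥ <;> simp [Finset.mem_filter, hq, hb] <;> rw [hq, hb]
        · simp [Finset.mem_filter, hq]
    rw [e] at h
    exact h
  · intro hhat
    exact ⟨hat_to_c hsigned hpos hhat, hat_to_d hsigned hpos hhat⟩
end

section
/- Let R ⊆ (𝕋ⁿ)². The following are equivalent: (1) R is a signed bend cone and R is closed in (𝕋ⁿ)²; (2) there exists a closed monotone pre-congruence C ⊆ (𝕋ⁿ)² such that R is the signed part of C, i.e., R = {(x⁺,x⁻) ∈ C : (x⁺,x⁻) is signed}. -/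
section Aux

@[simp] lemma tropExp_bot : tropExp ⊥ = 0 := rfl
@[simp] lemma tropExp_coe (x : ℝ) : tropExp (x : Trop) = Real.exp x := rfl

lemma tropExp_nonneg (a : Trop) : 0 ≤ tropExp a := by
  cases a using WithBot.recBotCoe with
  | bot => simp
  | coe x => simpa using (Real.exp_pos x).le

lemma tropExp_le_iff {a b : Trop} : tropExp a ≤ tropExp b ↔ a ≤ b := by
  cases a using WithBot.recBotCoe with
  | bot => simp [tropExp_nonneg]
  | coe x =>
    cases b using WithBot.recBotCoe with
    | bot => simp [(Real.exp_pos x).not_ge, (WithBot.not_coe_le_bot x)]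
    | coe y => simp [Real.exp_le_exp, WithBot.coe_le_coe]

lemma tropExp_mono : Monotone tropExp := fun _ _ h => tropExp_le_iff.2 h

lemma tropExp_eq_zero_iff {a : Trop} : tropExp a = 0 ↔ a = ⊥ := by
  cases a using WithBot.recBotCoe with
  | bot => simp
  | coe x => simp [(Real.exp_pos x).ne']

lemma tropExp_add (a b : Trop) : tropExp (a + b) = tropExp a * tropExp b := by
  cases a using WithBot.recBotCoe with
  | bot => simp [WithBot.bot_add]
  | coe x =>
    cases b using WithBot.recBotCoe with
    | bot => simp [WithBot.add_bot]
    | coe y =>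
      have h : (x : Trop) + (y : Trop) = ((x + y : ℝ) : Trop) := by norm_cast
      rw [h, tropExp_coe]; exact Real.exp_add x y

lemma continuous_tropExp : Continuous tropExp := continuous_induced_dom

lemma isClosed_eq_bot : IsClosed {a : Trop | a = ⊥} := by
  have : {a : Trop | a = ⊥} = tropExp ⁻¹' {0} := by
    ext a; simp [tropExp_eq_zero_iff]
  rw [this]
  exact (isClosed_singleton).preimage continuous_tropExp

lemma isClosed_le_trop : IsClosed {p : Trop × Trop | p.1 ≤ p.2} := by
  have : {p : Trop × Trop | p.1 ≤ p.2}
      = (fun p : Trop × Trop => (tropExp p.1, tropExp p.2)) ⁻¹' {q : ℝ × ℝ | q.1 ≤ q.2} := by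
    ext p; simp [tropExp_le_iff]
  rw [this]
  exact isClosed_le continuous_fst continuous_snd |>.preimage
    ((continuous_tropExp.comp continuous_fst).prodMk (continuous_tropExp.comp continuous_snd))

-- key convergence lemma
lemma tendsto_sup_tsmul (a b : Trop) {ε : ℝ} (hε : 0 < ε) :
    Filter.Tendsto (fun k : ℕ => a ⊔ ((((k : ℝ) * (-ε) : ℝ) : Trop) + b)) Filter.atTop (nhds a) := by
  rw [nhds_induced tropExp, Filter.tendsto_comap_iff]
  have hcomp : (tropExp ∘ fun k : ℕ => a ⊔ ((((k : ℝ) * (-ε) : ℝ) : Trop) + b))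
      = fun k : ℕ => tropExp a ⊔ ((Real.exp (-ε))^k * tropExp b) := by
    funext k
    simp only [Function.comp_apply, tropExp_mono.map_max, tropExp_add, tropExp_coe]
    rw [mul_comm (k:ℝ) (-ε), ← Real.exp_nat_mul, mul_comm (k:ℝ) (-ε)]
  rw [hcomp]
  have h1 : Filter.Tendsto (fun k : ℕ => (Real.exp (-ε))^k * tropExp b) Filter.atTop (nhds 0) := by
    have := tendsto_pow_atTop_nhds_zero_of_lt_one (Real.exp_nonneg (-ε))
      (by rw [Real.exp_lt_one_iff]; linarith)
    simpa using this.mul_const (tropExp b)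
  have := (tendsto_const_nhds (x := tropExp a) (f := Filter.atTop (α := ℕ))).max h1
  simpa [max_eq_left (tropExp_nonneg a)] using this

end Aux
section Aux2
variable {n : ℕ}

lemma botVec_le (f : Fin n → Trop) : (fun _ => (⊥:Trop)) ≤ f := fun i => bot_le

lemma sup_botVec (f : Fin n → Trop) : f ⊔ (fun _ => (⊥:Trop)) = f := by
  funext i; simp [Pi.sup_apply]

lemma botVec_sup (f : Fin n → Trop) : (fun _ => (⊥:Trop)) ⊔ f = f := by
  funext i; simp [Pi.sup_apply]

lemma vee_signed (f : (Fin n → Trop) × (Fin n → Trop)) : SignedVecPair (vee f) := by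
  intro i
  by_cases h : f.2 i ≤ f.1 i
  · right; simp [vee, not_lt.2 h]
  · left; simp [vee, h]

lemma vee_eq_self {x : (Fin n → Trop) × (Fin n → Trop)} (hx : SignedVecPair x) : vee x = x := by
  have h1 : (vee x).1 = x.1 := by
    funext i
    rcases hx i with h | h
    · simp [vee, h]
    · simp [vee, h]
  have h2 : (vee x).2 = x.2 := by
    funext i
    rcases hx i with h | h
    · simp only [vee, h]
      rcases eq_or_ne (x.2 i) ⊥ with h2 | h2
      · simp [h2]
      · simp [h, h2.bot_lt]
    · simp [vee, h, not_lt.2 (h ▸ bot_le : x.2 i ≤ x.1 i)]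
  exact Prod.ext h1 h2

lemma tsmul_sup (l : Trop) (f g : Fin n → Trop) :
    tsmul l (f ⊔ g) = tsmul l f ⊔ tsmul l g := by
  funext i
  simp only [tsmul, Pi.sup_apply]
  exact (max_add_add_left l (f i) (g i)).symm

lemma tsmul_le_self {l : ℝ} (hl : l ≤ 0) (f : Fin n → Trop) : tsmul (l : Trop) f ≤ f := by
  intro i
  calc (l : Trop) + f i ≤ (0:ℝ) + f i := by
        exact add_le_add_left (WithBot.coe_le_coe.2 hl) _
    _ = f i := by
        rw [show ((0:ℝ):Trop) = 0 from rfl, zero_add]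

lemma tsmul_zero' (f : Fin n → Trop) : tsmul ((0:ℝ) : Trop) f = f := by
  funext i; simp [tsmul, show ((0:ℝ):Trop) = 0 from rfl, zero_add]

end Aux2
section Backward
variable {n : ℕ} {C : Set ((Fin n → Trop) × (Fin n → Trop))}

lemma cancel_lemma (hC : IsMonotonePrecongruence C) (hCc : IsClosed C)
    (u w j : Fin n → Trop) {ε : ℝ} (hε : 0 < ε)
    (hj : ∀ i, ((ε : ℝ) : Trop) + j i ≤ w i) (h : (u ⊔ j, w) ∈ C) : (u, w) ∈ C := by
  set c : ℕ → Trop := fun k => (((k : ℝ) * (-ε) : ℝ) : Trop) with hc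
  have hQ : ∀ k : ℕ, (u ⊔ tsmul (c k) j, w) ∈ C := by
    intro k
    induction k with
    | zero =>
      have : tsmul (c 0) j = j := by
        simp only [hc, Nat.cast_zero, zero_mul]; exact tsmul_zero' j
      rwa [this]
    | succ k ih =>
      have scaledB := hC.smul_mem _ h (c (k+1))
      have mono1 : ((tsmul (c (k+1)) w, tsmul (c k) j) :
          (Fin n → Trop) × (Fin n → Trop)) ∈ C := by
        apply hC.monotone_mem
        intro i
        have h1 : c (k+1) + (((ε : ℝ) : Trop) + j i) ≤ c (k+1) + w i :=
          add_le_add_right (hj i) _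
        have h2 : c (k+1) + (((ε : ℝ) : Trop) + j i) = c k + j i := by
          rw [← add_assoc]
          congr 1
          simp only [hc]
          have : ((((k:ℝ)+1) * (-ε) : ℝ) : Trop) + ((ε : ℝ) : Trop)
              = ((((k:ℝ)+1) * (-ε) + ε : ℝ) : Trop) := by norm_cast
          rw [show (((k+1:ℕ):ℝ) : ℝ) = ((k:ℝ)+1) by push_cast; ring] at *
          rw [this]
          congr 1
          ring
        calc c k + j i = c (k+1) + (((ε : ℝ) : Trop) + j i) := h2.symm
          _ ≤ c (k+1) + w i := h1
      have trans1 := hC.trans_mem _ scaledB _ mono1 rfl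
      have mono2 : ((u ⊔ tsmul (c (k+1)) j, u) :
          (Fin n → Trop) × (Fin n → Trop)) ∈ C :=
        hC.monotone_mem _ le_sup_left
      have addr := hC.add_mem _ mono2 _ trans1
      have hck1 : ((k+1 : ℕ) : ℝ) * (-ε) ≤ 0 := by
        apply mul_nonpos_of_nonneg_of_nonpos
        · positivity
        · linarith
      have hleft : (u ⊔ tsmul (c (k+1)) j) ⊔ tsmul (c (k+1)) (u ⊔ j)
          = u ⊔ tsmul (c (k+1)) j := by
        apply sup_eq_left.2
        rw [tsmul_sup]
        apply sup_le
        · exact le_trans (tsmul_le_self hck1 u) le_sup_left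
        · exact le_sup_right
      rw [hleft] at addr
      exact hC.trans_mem _ addr _ ih rfl
  have htend : Filter.Tendsto (fun k : ℕ => ((u ⊔ tsmul (c k) j, w) :
      (Fin n → Trop) × (Fin n → Trop))) Filter.atTop (nhds (u, w)) := by
    apply Filter.Tendsto.prodMk_nhds
    · rw [tendsto_pi_nhds]
      intro i
      show Filter.Tendsto (fun k => (u ⊔ tsmul (c k) j) i) Filter.atTop (nhds (u i))
      simp only [hc, Pi.sup_apply, tsmul]
      exact tendsto_sup_tsmul (u i) (j i) hε
    · exact tendsto_const_nhds
  exact hCc.mem_of_tendsto htend (Filter.Eventually.of_forall hQ)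

lemma vee_mem_of_mem (hC : IsMonotonePrecongruence C) (hCc : IsClosed C)
    {f : (Fin n → Trop) × (Fin n → Trop)} (hf : f ∈ C) : vee f ∈ C := by
  set j : Fin n → Trop := fun i => if f.1 i < f.2 i then f.1 i else ⊥ with hjdef
  have h1 : (vee f).2 ≤ f.2 := by
    intro i; simp only [vee]; split <;> simp
  have h3 : ((f.1, (vee f).2) : (Fin n → Trop) × (Fin n → Trop)) ∈ C :=
    hC.trans_mem f hf (f.2, (vee f).2) (hC.monotone_mem _ h1) rfl
  have h4 : f.1 = (vee f).1 ⊔ j := by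
    funext i
    simp only [vee, Pi.sup_apply, hjdef]
    by_cases h : f.2 i ≤ f.1 i
    · simp [h, not_lt.2 h]
    · simp [h, not_le.1 h]
  have hex : ∀ i, ∃ e : ℝ, 0 < e ∧ ((e : ℝ) : Trop) + j i ≤ (vee f).2 i := by
    intro i
    by_cases hlt : f.1 i < f.2 i
    · have hj : j i = f.1 i := by simp [hjdef, hlt]
      have hv : (vee f).2 i = f.2 i := by simp [vee, hlt]
      cases hf1 : f.1 i using WithBot.recBotCoe with
      | bot => exact ⟨1, one_pos, by simp [hj, hf1, WithBot.add_bot]⟩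
      | coe a =>
        cases hf2 : f.2 i using WithBot.recBotCoe with
        | bot => rw [hf1, hf2] at hlt; exact absurd hlt (by simp)
        | coe b =>
          have hab : a < b := by
            rw [hf1, hf2] at hlt; exact_mod_cast hlt
          refine ⟨b - a, by linarith, ?_⟩
          rw [hj, hv, hf1, hf2]
          have : ((b - a : ℝ) : Trop) + ((a : ℝ) : Trop) = ((b : ℝ) : Trop) := by
            norm_cast; ring_nf
          rw [this]
    · exact ⟨1, one_pos, by simp [hjdef, hlt, WithBot.add_bot]⟩
  choose ef hef using hex
  set E : Finset ℝ := insert 1 (Finset.univ.image ef) with hE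
  have hEne : E.Nonempty := ⟨1, Finset.mem_insert_self _ _⟩
  set ε : ℝ := E.min' hEne with hεdef
  have hεpos : 0 < ε := by
    have := E.min'_mem hEne
    rw [← hεdef] at this
    rcases Finset.mem_insert.1 this with h | h
    · rw [h]; exact one_pos
    · rcases Finset.mem_image.1 h with ⟨i, _, hi⟩
      rw [← hi]; exact (hef i).1
  have hj' : ∀ i, ((ε : ℝ) : Trop) + j i ≤ (vee f).2 i := by
    intro i
    have hle : ε ≤ ef i := by
      apply Finset.min'_le
      exact Finset.mem_insert_of_mem (Finset.mem_image_of_mem _ (Finset.mem_univ i))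
    calc ((ε : ℝ) : Trop) + j i ≤ ((ef i : ℝ) : Trop) + j i :=
          add_le_add_left (WithBot.coe_le_coe.2 hle) _
      _ ≤ (vee f).2 i := (hef i).2
  have := cancel_lemma hC hCc (vee f).1 (vee f).2 j hεpos hj' (by rw [← h4]; exact h3)
  simpa using this

lemma oplusI_mem_precong (hC : IsMonotonePrecongruence C)
    {x y : (Fin n → Trop) × (Fin n → Trop)} (hx : x ∈ C) (hy : y ∈ C)
    (i : Fin n) (hxy : x.2 i = y.1 i) : oplusI i x y ∈ C := by
  set y' : Fin n → Trop := Function.update y.1 i ⊥ with hy'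
  have hA := hC.add_mem _ hx (y', y') (hC.monotone_mem _ le_rfl)
  have hg1 : ((x.2 ⊔ y', y.1) : (Fin n → Trop) × (Fin n → Trop)) ∈ C := by
    apply hC.monotone_mem
    intro i'
    by_cases h : i' = i
    · subst h
      calc y.1 i' = x.2 i' := hxy.symm
        _ ≤ (x.2 ⊔ y') i' := le_sup_left
    · calc y.1 i' = y' i' := by simp [hy', Function.update_of_ne h]
        _ ≤ (x.2 ⊔ y') i' := le_sup_right
  have hB := hC.trans_mem _ hA _ hg1 rfl
  have hD := hC.trans_mem _ hB _ hy rfl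
  have hE : ((x.1, Function.update x.2 i ⊥) : (Fin n → Trop) × (Fin n → Trop)) ∈ C := by
    apply hC.trans_mem _ hx _ (hC.monotone_mem (x.2, Function.update x.2 i ⊥) ?_) rfl
    intro i'
    by_cases h : i' = i
    · subst h; simp
    · simp [Function.update_of_ne h]
  have hE' := hC.add_mem _ hE (y', fun _ => (⊥:Trop)) (hC.monotone_mem _ (botVec_le _))
  have hfinal := hC.add_mem _ hD _ hE'
  have hl : (x.1 ⊔ y') ⊔ (x.1 ⊔ y') = x.1 ⊔ y' := sup_idem _
  have hr : y.2 ⊔ (Function.update x.2 i ⊥ ⊔ (fun _ => (⊥:Trop)))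
      = Function.update x.2 i ⊥ ⊔ y.2 := by
    rw [sup_botVec, sup_comm]
  rw [hl, hr] at hfinal
  exact hfinal

lemma isClosed_signedPart (hCc : IsClosed C) : IsClosed (signedPart C) := by
  have : signedPart C = C ∩ {x | SignedVecPair x} := rfl
  rw [this]
  apply hCc.inter
  have : {x : (Fin n → Trop) × (Fin n → Trop) | SignedVecPair x}
      = ⋂ i, ({x : (Fin n → Trop) × (Fin n → Trop) | x.1 i = ⊥}
          ∪ {x | x.2 i = ⊥}) := by
    ext x; simp [SignedVecPair, Set.mem_iInter]
  rw [this]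
  apply isClosed_iInter
  intro i
  apply IsClosed.union
  · have : {x : (Fin n → Trop) × (Fin n → Trop) | x.1 i = ⊥}
        = (fun x : (Fin n → Trop) × (Fin n → Trop) => x.1 i) ⁻¹' {a | a = ⊥} := rfl
    rw [this]
    exact isClosed_eq_bot.preimage ((continuous_apply i).comp continuous_fst)
  · have : {x : (Fin n → Trop) × (Fin n → Trop) | x.2 i = ⊥}
        = (fun x : (Fin n → Trop) × (Fin n → Trop) => x.2 i) ⁻¹' {a | a = ⊥} := rfl
    rw [this]
    exact isClosed_eq_bot.preimage ((continuous_apply i).comp continuous_snd)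

lemma backward_direction (hC : IsMonotonePrecongruence C) (hCc : IsClosed C) :
    IsSignedBendCone (signedPart C) ∧ IsClosed (signedPart C) := by
  refine ⟨⟨?_, ?_, ?_, ?_, ?_⟩, isClosed_signedPart hCc⟩
  · exact fun x hx => hx.2
  · intro xp
    exact ⟨hC.monotone_mem _ (botVec_le _), fun i => Or.inr rfl⟩
  · intro x hx l
    refine ⟨hC.smul_mem x hx.1 l, fun i => ?_⟩
    rcases hx.2 i with h | h
    · left; simp [tsmul, h, WithBot.add_bot]
    · right; simp [tsmul, h, WithBot.add_bot]
  · intro x hx y hy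
    exact ⟨vee_mem_of_mem hC hCc (hC.add_mem x hx.1 y hy.1), vee_signed _⟩
  · intro x hx y hy i hxy
    exact ⟨vee_mem_of_mem hC hCc (oplusI_mem_precong hC hx.1 hy.1 i hxy), vee_signed _⟩

end Backward
section PointwiseVee
variable {n : ℕ}

lemma vee_tsmul (l : Trop) (f : (Fin n → Trop) × (Fin n → Trop)) :
    vee (tsmul l f.1, tsmul l f.2) = (tsmul l (vee f).1, tsmul l (vee f).2) := by
  rcases eq_or_ne l ⊥ with rfl | hl
  · apply Prod.ext <;> funext i <;>
      simp [vee, tsmul, WithBot.bot_add]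
  · apply Prod.ext <;> funext i <;> simp only [vee, tsmul]
    · simp only [WithBot.add_le_add_iff_left hl]
      split
      · rfl
      · exact (WithBot.add_bot l).symm
    · simp only [WithBot.add_lt_add_iff_left hl]
      split
      · rfl
      · exact (WithBot.add_bot l).symm

lemma signed_sup_eq (a b : Trop) :
    (if b ≤ a then a else ⊥) ⊔ (if a < b then b else ⊥) = a ⊔ b := by
  by_cases h : b ≤ a
  · simp [h, not_lt.2 h, sup_eq_left.2 h]
  · simp [h, not_le.1 h, sup_eq_right.2 (not_le.1 h).le]

lemma if_le_self (a b : Trop) : (if b ≤ a then a else ⊥) ≤ a := by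
  split <;> simp

lemma if_lt_self (a b : Trop) : (if a < b then b else ⊥) ≤ b := by
  split <;> simp

lemma vee_point_A (a b c d : Trop) (hBA : b ⊔ d ≤ a ⊔ c) :
    (if b ≤ a then a else ⊥) ⊔ (if d ≤ c then c else ⊥) = a ⊔ c := by
  refine le_antisymm (sup_le_sup (if_le_self a b) (if_le_self c d)) ?_
  by_cases h1 : b ≤ a
  · by_cases h2 : d ≤ c
    · rw [if_pos h1, if_pos h2]
    · have hca : c ≤ a := by
        by_contra hac
        exact h2 (le_trans le_sup_right (le_trans hBA (sup_le (not_le.1 hac).le le_rfl)))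
      calc a ⊔ c = a := sup_eq_left.2 hca
        _ = if b ≤ a then a else ⊥ := (if_pos h1).symm
        _ ≤ _ := le_sup_left
  · have hac : a ≤ c := by
      by_contra h
      exact h1 (le_trans le_sup_left (le_trans hBA (sup_le le_rfl (not_le.1 h).le)))
    have hACc : a ⊔ c = c := sup_eq_right.2 hac
    have hdc : d ≤ c := le_trans le_sup_right (le_trans hBA hACc.le)
    calc a ⊔ c = c := hACc
      _ = if d ≤ c then c else ⊥ := (if_pos hdc).symm
      _ ≤ _ := le_sup_right

lemma vee_point_B (a b c d : Trop) (hAB : a ⊔ c < b ⊔ d) :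
    (if a < b then b else ⊥) ⊔ (if c < d then d else ⊥) = b ⊔ d := by
  have hab : (if b ≤ a then a else ⊥) ⊔ (if a < b then b else ⊥) = a ⊔ b := signed_sup_eq a b
  have hcd : (if d ≤ c then c else ⊥) ⊔ (if c < d then d else ⊥) = c ⊔ d := signed_sup_eq c d
  have hsup : ((if b ≤ a then a else ⊥) ⊔ (if d ≤ c then c else ⊥)) ⊔
      ((if a < b then b else ⊥) ⊔ (if c < d then d else ⊥)) = (a ⊔ c) ⊔ (b ⊔ d) := by
    rw [sup_sup_sup_comm, hab, hcd, sup_sup_sup_comm]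
  have hA' : (if b ≤ a then a else ⊥) ⊔ (if d ≤ c then c else ⊥) ≤ a ⊔ c :=
    sup_le_sup (if_le_self a b) (if_le_self c d)
  have h1 : ((if b ≤ a then a else ⊥) ⊔ (if d ≤ c then c else ⊥)) ⊔
      ((if a < b then b else ⊥) ⊔ (if c < d then d else ⊥)) = b ⊔ d := by
    rw [hsup]; exact sup_eq_right.2 hAB.le
  rcases le_total ((if a < b then b else ⊥) ⊔ (if c < d then d else ⊥))
      ((if b ≤ a then a else ⊥) ⊔ (if d ≤ c then c else ⊥)) with h | h
  · exfalso
    rw [sup_eq_left.2 h] at h1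
    exact absurd (h1 ▸ hA') (not_le.2 hAB)
  · rw [sup_eq_right.2 h] at h1
    exact h1

lemma vee_sup_vee (f g : (Fin n → Trop) × (Fin n → Trop)) :
    vee ((vee f).1 ⊔ (vee g).1, (vee f).2 ⊔ (vee g).2) = vee (f.1 ⊔ g.1, f.2 ⊔ g.2) := by
  apply Prod.ext <;> funext i <;>
    simp only [vee, Pi.sup_apply]
  · show (if ((if f.1 i < f.2 i then f.2 i else ⊥) ⊔ (if g.1 i < g.2 i then g.2 i else ⊥)) ≤ ((if f.2 i ≤ f.1 i then f.1 i else ⊥) ⊔ (if g.2 i ≤ g.1 i then g.1 i else ⊥)) then ((if f.2 i ≤ f.1 i then f.1 i else ⊥) ⊔ (if g.2 i ≤ g.1 i then g.1 i else ⊥)) else ⊥) = if f.2 i ⊔ g.2 i ≤ f.1 i ⊔ g.1 i then f.1 i ⊔ g.1 i else ⊥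
    set a := f.1 i; set b := f.2 i; set c := g.1 i; set d := g.2 i
    by_cases hBA : b ⊔ d ≤ a ⊔ c
    · rw [if_pos hBA, vee_point_A a b c d hBA]
      have hB' : (if a < b then b else ⊥) ⊔ (if c < d then d else ⊥) ≤ a ⊔ c :=
        le_trans (sup_le_sup (if_lt_self a b) (if_lt_self c d)) hBA
      rw [if_pos hB']
    · have hAB : a ⊔ c < b ⊔ d := not_le.1 hBA
      rw [if_neg hBA, vee_point_B a b c d hAB]
      rw [if_neg (not_le.2 (lt_of_le_of_lt
        (sup_le_sup (if_le_self a b) (if_le_self c d)) hAB))]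
  · show (if ((if f.2 i ≤ f.1 i then f.1 i else ⊥) ⊔ (if g.2 i ≤ g.1 i then g.1 i else ⊥)) < ((if f.1 i < f.2 i then f.2 i else ⊥) ⊔ (if g.1 i < g.2 i then g.2 i else ⊥)) then ((if f.1 i < f.2 i then f.2 i else ⊥) ⊔ (if g.1 i < g.2 i then g.2 i else ⊥)) else ⊥) = if f.1 i ⊔ g.1 i < f.2 i ⊔ g.2 i then f.2 i ⊔ g.2 i else ⊥
    set a := f.1 i; set b := f.2 i; set c := g.1 i; set d := g.2 i
    by_cases hAB : a ⊔ c < b ⊔ d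
    · rw [if_pos hAB, vee_point_B a b c d hAB]
      rw [if_pos (lt_of_le_of_lt (sup_le_sup (if_le_self a b) (if_le_self c d)) hAB)]
    · have hBA : b ⊔ d ≤ a ⊔ c := not_lt.1 hAB
      rw [if_neg hAB, vee_point_A a b c d hBA]
      rw [if_neg (not_lt.2 (le_trans
        (sup_le_sup (if_lt_self a b) (if_lt_self c d)) hBA))]

end PointwiseVee
section RWorld
variable {n : ℕ} {R : Set ((Fin n → Trop) × (Fin n → Trop))}

noncomputable def deltaV (i : Fin n) (c : Trop) : Fin n → Trop := fun j => if j = i then c else ⊥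

lemma signed_fix_1 {a b : Trop} (h : a = ⊥ ∨ b = ⊥) : (if b ≤ a then a else ⊥) = a := by
  rcases h with h | h
  · subst h; split <;> rfl
  · subst h; simp

lemma signed_fix_2 {a b : Trop} (h : a = ⊥ ∨ b = ⊥) : (if a < b then b else ⊥) = b := by
  rcases h with h | h
  · subst h
    rcases eq_or_ne b ⊥ with h2 | h2
    · simp [h2]
    · simp [h2.bot_lt]
  · subst h; simp

lemma delete_neg (hR : IsSignedBendCone R) {w : (Fin n → Trop) × (Fin n → Trop)}
    (hw : w ∈ R) (k : Fin n) : ((w.1, Function.update w.2 k ⊥) :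
      (Fin n → Trop) × (Fin n → Trop)) ∈ R := by
  have hz := hR.pos_mem (deltaV k (w.2 k))
  have hmem := hR.addI_vee_mem w hw _ hz k (by simp [deltaV])
  have he : oplusI k w (deltaV k (w.2 k), fun _ => (⊥:Trop))
      = (w.1, Function.update w.2 k ⊥) := by
    simp only [oplusI]
    congr 1
    · have h1 : Function.update (deltaV k (w.2 k)) k (⊥:Trop) = fun _ => (⊥:Trop) := by
        funext j
        by_cases h : j = k
        · subst h; simp
        · simp [Function.update_of_ne h, deltaV, h]
      rw [h1, sup_botVec]
    · rw [sup_botVec]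
  rw [he] at hmem
  rwa [vee_eq_self ?_] at hmem
  intro i
  by_cases h : i = k
  · subst h; right; simp
  · rcases hR.signed w hw i with h2 | h2
    · left; exact h2
    · right; simpa [Function.update_of_ne h] using h2

lemma single_neg_full (hR : IsSignedBendCone R) {w : (Fin n → Trop) × (Fin n → Trop)}
    (hw : w ∈ R) (i : Fin n) :
    ((w.1, deltaV i (w.2 i)) : (Fin n → Trop) × (Fin n → Trop)) ∈ R := by
  have claim : ∀ T : Finset (Fin n),
      ((w.1, fun j => if j ∈ T ∧ j ≠ i then ⊥ else w.2 j) :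
        (Fin n → Trop) × (Fin n → Trop)) ∈ R := by
    intro T
    induction T using Finset.induction_on with
    | empty => simpa using hw
    | @insert k T hkT ih =>
      by_cases hk : k = i
      · subst hk
        have : (fun j => if j ∈ insert k T ∧ j ≠ k then (⊥:Trop) else w.2 j)
            = fun j => if j ∈ T ∧ j ≠ k then (⊥:Trop) else w.2 j := by
          funext j
          by_cases hj : j = k
          · simp [hj]
          · simp [Finset.mem_insert, hj]
        rw [this]
        exact ih
      · have hdel := delete_neg hR ih k
        have : Function.update (fun j => if j ∈ T ∧ j ≠ i then (⊥:Trop) else w.2 j) k ⊥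
            = fun j => if j ∈ insert k T ∧ j ≠ i then (⊥:Trop) else w.2 j := by
          funext j
          by_cases hj : j = k
          · subst hj; simp [hk]
          · simp [Function.update_of_ne hj, Finset.mem_insert, hj]
        rwa [this] at hdel
  have := claim Finset.univ
  have heq : (fun j => if j ∈ Finset.univ ∧ j ≠ i then (⊥:Trop) else w.2 j)
      = deltaV i (w.2 i) := by
    funext j
    by_cases hj : j = i
    · subst hj; simp [deltaV]
    · simp [deltaV, hj]
  rwa [heq] at this

lemma single_neg (hR : IsSignedBendCone R) {w : (Fin n → Trop) × (Fin n → Trop)}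
    (hw : w ∈ R) (i : Fin n) (c : Trop) (hc : c ≤ w.2 i) :
    ((w.1, deltaV i c) : (Fin n → Trop) × (Fin n → Trop)) ∈ R := by
  cases c using WithBot.recBotCoe with
  | bot =>
    have := hR.pos_mem w.1
    have heq : (fun _ => (⊥:Trop)) = deltaV i (⊥:Trop) := by
      funext j; simp [deltaV]
    rwa [heq] at this
  | coe a =>
    cases hw2 : w.2 i using WithBot.recBotCoe with
    | bot => rw [hw2] at hc; exact absurd hc (by simp)
    | coe b =>
      rw [hw2] at hc
      have hab : a ≤ b := by exact_mod_cast hc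
      have sA := single_neg_full hR hw i
      rw [hw2] at sA
      have scaled := hR.smul_mem _ sA (((-(b-a) : ℝ) : Trop))
      have hadd := hR.add_vee_mem _ scaled _ (hR.pos_mem w.1)
      have h1 : tsmul ((-(b-a):ℝ) : Trop) w.1 ⊔ w.1 = w.1 :=
        sup_eq_right.2 (tsmul_le_self (by linarith) w.1)
      have h2 : tsmul ((-(b-a):ℝ) : Trop) (deltaV i ((b:ℝ) : Trop)) ⊔ (fun _ => (⊥:Trop))
          = deltaV i ((a:ℝ) : Trop) := by
        rw [sup_botVec]
        funext j
        by_cases hj : j = i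
        · subst hj
          simp only [tsmul, deltaV, eq_self_iff_true, if_true]
          have : ((-(b-a):ℝ) : Trop) + ((b:ℝ) : Trop) = ((a:ℝ) : Trop) := by
            norm_cast; ring_nf
          rw [this]
        · simp [tsmul, deltaV, hj, WithBot.add_bot]
      simp only [h1, h2] at hadd
      rw [vee_eq_self ?_] at hadd
      · exact hadd
      · intro j
        by_cases hj : j = i
        · subst hj
          left
          rcases hR.signed w hw j with h | h
          · exact h
          · rw [h] at hw2; exact absurd hw2 (by simp)
        · right; simp [deltaV, hj]

lemma promote_coord (hR : IsSignedBendCone R) {w : (Fin n → Trop) × (Fin n → Trop)}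
    (hw : w ∈ R) (i : Fin n) :
    ((Function.update w.1 i (w.1 i ⊔ w.2 i), Function.update w.2 i ⊥) :
      (Fin n → Trop) × (Fin n → Trop)) ∈ R := by
  have hadd := hR.add_vee_mem w hw _ (hR.pos_mem (deltaV i (w.2 i)))
  have heq : vee (w.1 ⊔ deltaV i (w.2 i), w.2 ⊔ (fun _ => (⊥:Trop)))
      = (Function.update w.1 i (w.1 i ⊔ w.2 i), Function.update w.2 i ⊥) := by
    rw [sup_botVec]
    apply Prod.ext <;> funext j <;> simp only [vee, Pi.sup_apply]
    · by_cases hj : j = i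
      · subst hj
        simp only [deltaV, eq_self_iff_true, if_true, Function.update_self]
        rw [if_pos le_sup_right]
      · simp only [deltaV, if_neg hj, Function.update_of_ne hj]
        rw [sup_bot_eq]
        exact signed_fix_1 (hR.signed w hw j)
    · by_cases hj : j = i
      · subst hj
        simp only [deltaV, eq_self_iff_true, if_true, Function.update_self]
        rw [if_neg (not_lt.2 le_sup_right)]
      · simp only [deltaV, if_neg hj, Function.update_of_ne hj]
        rw [sup_bot_eq]
        exact signed_fix_2 (hR.signed w hw j)
  rwa [heq] at hadd

end RWorld
section TransKey
variable {n : ℕ}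

noncomputable def Sset (p m q : Fin n → Trop) : Finset (Fin n) :=
  Finset.univ.filter (fun i => p i < m i ∧ q i ≤ m i)

lemma mem_Sset {p m q : Fin n → Trop} {i : Fin n} :
    i ∈ Sset p m q ↔ (p i < m i ∧ q i ≤ m i) := by simp [Sset]

noncomputable def AT (p m q : Fin n → Trop) (T : Finset (Fin n)) :
    (Fin n → Trop) × (Fin n → Trop) :=
  (fun j => if j ∈ Sset p m q then (if j ∈ T then ⊥ else m j)
            else (if q j ≤ p j then p j else ⊥),
   fun j => if j ∈ Sset p m q then (if j ∈ T ∧ p j < q j then q j else ⊥)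
            else (if p j < q j then q j else ⊥))

lemma AT_signed (p m q : Fin n → Trop) (T : Finset (Fin n)) (j : Fin n) :
    (AT p m q T).1 j = ⊥ ∨ (AT p m q T).2 j = ⊥ := by
  simp only [AT]
  by_cases hjS : j ∈ Sset p m q
  · by_cases hjT : j ∈ T
    · left; simp [hjS, hjT]
    · right; simp [hjS, hjT]
  · by_cases hqp : q j ≤ p j
    · right; simp [hjS, not_lt.2 hqp]
    · left; simp [hjS, hqp]

lemma key1 (p m q : Fin n → Trop) (T : Finset (Fin n)) (j : Fin n) :
    (if (AT p m q T).2 j ≤ ((if m j ≤ p j then p j else ⊥) ⊔ (AT p m q T).1 j)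
       then ((if m j ≤ p j then p j else ⊥) ⊔ (AT p m q T).1 j) else ⊥)
    = (AT p m q T).1 j := by
  by_cases hjS : j ∈ Sset p m q
  · obtain ⟨hp, _⟩ := mem_Sset.1 hjS
    rw [if_neg (not_le.2 hp), bot_sup_eq]
    exact signed_fix_1 (AT_signed p m q T j)
  · have hA1 : (AT p m q T).1 j = if q j ≤ p j then p j else ⊥ := by simp [AT, hjS]
    have hA2 : (AT p m q T).2 j = if p j < q j then q j else ⊥ := by simp [AT, hjS]
    rw [hA1, hA2]
    by_cases hmp : m j ≤ p j
    · rw [if_pos hmp]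
      by_cases hqp : q j ≤ p j
      · rw [if_pos hqp, if_neg (not_lt.2 hqp), sup_idem, if_pos bot_le]
      · rw [if_neg hqp, if_pos (not_le.1 hqp), sup_bot_eq,
          if_neg (not_le.2 (not_le.1 hqp))]
    · have hpm : p j < m j := not_le.1 hmp
      have hmq : m j < q j := by
        by_contra hc
        exact hjS (mem_Sset.2 ⟨hpm, not_lt.1 hc⟩)
      have hpq : p j < q j := hpm.trans hmq
      rw [if_neg hmp, if_neg (not_le.2 hpq), if_pos hpq, bot_sup_eq]
      split <;> rfl

lemma key2 (p m q : Fin n → Trop) (T : Finset (Fin n)) (j : Fin n) :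
    (if ((if m j ≤ p j then p j else ⊥) ⊔ (AT p m q T).1 j) < (AT p m q T).2 j
       then (AT p m q T).2 j else ⊥)
    = (AT p m q T).2 j := by
  by_cases hjS : j ∈ Sset p m q
  · obtain ⟨hp, _⟩ := mem_Sset.1 hjS
    rw [if_neg (not_le.2 hp), bot_sup_eq]
    exact signed_fix_2 (AT_signed p m q T j)
  · have hA1 : (AT p m q T).1 j = if q j ≤ p j then p j else ⊥ := by simp [AT, hjS]
    have hA2 : (AT p m q T).2 j = if p j < q j then q j else ⊥ := by simp [AT, hjS]
    rw [hA1, hA2]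
    by_cases hmp : m j ≤ p j
    · rw [if_pos hmp]
      by_cases hqp : q j ≤ p j
      · rw [if_pos hqp, if_neg (not_lt.2 hqp), sup_idem, if_neg (not_lt.2 bot_le)]
      · rw [if_neg hqp, if_pos (not_le.1 hqp), sup_bot_eq, if_pos (not_le.1 hqp)]
    · have hpm : p j < m j := not_le.1 hmp
      have hmq : m j < q j := by
        by_contra hc
        exact hjS (mem_Sset.2 ⟨hpm, not_lt.1 hc⟩)
      have hpq : p j < q j := hpm.trans hmq
      rw [if_neg hmp, if_neg (not_le.2 hpq), if_pos hpq, bot_sup_eq,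
        if_pos (lt_of_le_of_lt bot_le hpq)]

end TransKey
section TransKey2
variable {n : ℕ} {R : Set ((Fin n → Trop) × (Fin n → Trop))}

lemma AT_empty (p m q : Fin n → Trop) :
    AT p m q ∅ = vee ((vee (p,m)).1 ⊔ (vee (m,q)).1, (vee (p,m)).2 ⊔ (vee (m,q)).2) := by
  apply Prod.ext <;> funext j <;>
    simp only [AT, vee, Pi.sup_apply, Finset.notMem_empty, if_false,
      false_and, Finset.notMem_empty] <;>
    by_cases hjS : j ∈ Sset p m q
  · obtain ⟨hp, hq⟩ := mem_Sset.1 hjS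
    simp [hjS, hp, hq, not_le.2 hp, not_lt.2 hq]
  · by_cases hmp : m j ≤ p j
    · by_cases hqm : q j ≤ m j
      · simp [hjS, hmp, hqm, hqm.trans hmp, not_lt.2 hmp, not_lt.2 hqm,
          sup_eq_left.2 hmp]
      · simp [hjS, hmp, hqm, not_le.1 hqm, not_lt.2 hmp]
    · have hpm : p j < m j := not_le.1 hmp
      have hmq : m j < q j := by
        by_contra hc
        exact hjS (mem_Sset.2 ⟨hpm, not_lt.1 hc⟩)
      have hpq : p j < q j := hpm.trans hmq
      simp [hjS, hmp, hpm, hmq, not_le.2 hpq, not_le.2 hmq,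
        sup_eq_right.2 hmq.le, not_le.2 (lt_of_le_of_lt bot_le hpq)]
  · obtain ⟨hp, hq⟩ := mem_Sset.1 hjS
    simp [hjS, hp, hq, not_le.2 hp, not_lt.2 hq]
  · by_cases hmp : m j ≤ p j
    · by_cases hqm : q j ≤ m j
      · simp [hjS, hmp, hqm, not_lt.2 (hqm.trans hmp), not_lt.2 hmp, not_lt.2 hqm,
          sup_eq_left.2 hmp]
      · simp [hjS, hmp, hqm, not_le.1 hqm, not_lt.2 hmp]
    · have hpm : p j < m j := not_le.1 hmp
      have hmq : m j < q j := by
        by_contra hc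
        exact hjS (mem_Sset.2 ⟨hpm, not_lt.1 hc⟩)
      have hpq : p j < q j := hpm.trans hmq
      simp [hjS, hmp, hpm, hmq, hpq, not_le.2 hmq,
        sup_eq_right.2 hmq.le, lt_of_le_of_lt bot_le hpq]

lemma update_deltaV_self (i : Fin n) (c : Trop) :
    Function.update (deltaV i c) i ⊥ = fun _ => (⊥:Trop) := by
  funext j
  by_cases hj : j = i
  · subst hj; simp
  · simp [Function.update_of_ne hj, deltaV, hj]

lemma stepA_eq (p m q : Fin n → Trop) (T : Finset (Fin n)) (i : Fin n)
    (hiS : i ∈ Sset p m q) (hiT : i ∉ T) :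
    vee (oplusI i ((vee (p,m)).1, deltaV i (m i)) (AT p m q T))
    = (Function.update (AT p m q T).1 i ⊥, (AT p m q T).2) := by
  obtain ⟨hpi, hqi⟩ := mem_Sset.1 hiS
  apply Prod.ext <;> funext j <;>
    simp only [vee, oplusI, Pi.sup_apply] <;>
    by_cases hj : j = i
  · subst hj
    simp [update_deltaV_self, AT, hiS, hiT, vee, not_le.2 hpi]
  · rw [Function.update_of_ne hj, Function.update_of_ne hj]
    have h1 : deltaV i (m i) j = ⊥ := by simp [deltaV, hj]
    rw [h1, bot_sup_eq]
    exact key1 p m q T j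
  · subst hj
    simp [update_deltaV_self, AT, hiS, hiT, vee, not_le.2 hpi]
  · rw [Function.update_of_ne hj, Function.update_of_ne hj]
    have h1 : deltaV i (m i) j = ⊥ := by simp [deltaV, hj]
    rw [h1, bot_sup_eq]
    exact key2 p m q T j

lemma AT_insert_of_not_lt (p m q : Fin n → Trop) (T : Finset (Fin n)) (i : Fin n)
    (hiS : i ∈ Sset p m q) (hiT : i ∉ T) (hpq : ¬ p i < q i) :
    AT p m q (insert i T) = (Function.update (AT p m q T).1 i ⊥, (AT p m q T).2) := by
  apply Prod.ext <;> funext j <;> by_cases hj : j = i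
  · subst hj; simp [AT, hiS]
  · show (AT p m q (insert i T)).1 j = Function.update (AT p m q T).1 i ⊥ j
    rw [Function.update_of_ne hj]
    simp [AT, Finset.mem_insert, hj]
  · subst hj; simp [AT, hiS, hiT, hpq]
  · simp [AT, Finset.mem_insert, hj]

lemma stepB_eq (p m q : Fin n → Trop) (T : Finset (Fin n)) (i : Fin n)
    (hiS : i ∈ Sset p m q) (hiT : i ∉ T) (hpq : p i < q i) :
    vee (oplusI i (Function.update (AT p m q T).1 i ⊥, (AT p m q T).2)
      ((vee (p,m)).1, deltaV i (q i)))
    = AT p m q (insert i T) := by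
  obtain ⟨hpi, hqi⟩ := mem_Sset.1 hiS
  have hqbot : (⊥:Trop) < q i := lt_of_le_of_lt bot_le hpq
  apply Prod.ext <;> funext j <;>
    simp only [vee, oplusI, Pi.sup_apply] <;>
    by_cases hj : j = i
  · subst hj
    simp [AT, hiS, hiT, deltaV, vee, not_le.2 hpi, not_le.2 hqbot]
  · rw [Function.update_of_ne hj, Function.update_of_ne hj, Function.update_of_ne hj]
    have h1 : deltaV i (q i) j = ⊥ := by simp [deltaV, hj]
    have h2 : (AT p m q (insert i T)).1 j = (AT p m q T).1 j := by
      simp [AT, Finset.mem_insert, hj]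
    rw [h1, sup_bot_eq, h2,
      sup_comm ((AT p m q T).1 j) (if m j ≤ p j then p j else ⊥)]
    exact key1 p m q T j
  · subst hj
    simp [AT, hiS, hiT, deltaV, vee, not_le.2 hpi, not_le.2 hqbot, hqbot, hpq]
  · rw [Function.update_of_ne hj, Function.update_of_ne hj, Function.update_of_ne hj]
    have h1 : deltaV i (q i) j = ⊥ := by simp [deltaV, hj]
    have h2 : (AT p m q (insert i T)).2 j = (AT p m q T).2 j := by
      simp [AT, Finset.mem_insert, hj]
    rw [h1, sup_bot_eq, h2,
      sup_comm ((AT p m q T).1 j) (if m j ≤ p j then p j else ⊥)]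
    exact key2 p m q T j

lemma AT_mem (hR : IsSignedBendCone R) {p m q : Fin n → Trop}
    (hx : vee (p,m) ∈ R) (hy : vee (m,q) ∈ R) :
    ∀ T : Finset (Fin n), T ⊆ Sset p m q → AT p m q T ∈ R := by
  intro T
  induction T using Finset.induction_on with
  | empty => intro _; rw [AT_empty]; exact hR.add_vee_mem _ hx _ hy
  | @insert i T hiT ih =>
    intro hsub
    rw [Finset.insert_subset_iff] at hsub
    obtain ⟨hiS, hTS⟩ := hsub
    obtain ⟨hpi, hqi⟩ := mem_Sset.1 hiS
    have hAT := ih hTS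
    have hv2 : (vee (p,m)).2 i = m i := by simp [vee, hpi]
    have hxi1 : ((vee (p,m)).1, deltaV i (m i)) ∈ R := by
      apply single_neg hR hx i
      rw [hv2]
    have hcond1 : ((vee (p,m)).1, deltaV i (m i)).2 i = (AT p m q T).1 i := by
      simp [deltaV, AT, hiS, hiT]
    have hF := hR.addI_vee_mem _ hxi1 _ hAT i hcond1
    rw [stepA_eq p m q T i hiS hiT] at hF
    by_cases hpq : p i < q i
    · have hxi2 : ((vee (p,m)).1, deltaV i (q i)) ∈ R := by
        apply single_neg hR hx i
        rw [hv2]; exact hqi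
      have hcond2 : (Function.update (AT p m q T).1 i ⊥, (AT p m q T).2).2 i
          = ((vee (p,m)).1, deltaV i (q i)).1 i := by
        simp [AT, hiS, hiT, vee, not_le.2 hpi]
      have hG := hR.addI_vee_mem _ hF _ hxi2 i hcond2
      rw [stepB_eq p m q T i hiS hiT hpq] at hG
      exact hG
    · rw [AT_insert_of_not_lt p m q T i hiS hiT hpq]
      exact hF

noncomputable def BU (p m q : Fin n → Trop) (U : Finset (Fin n)) :
    (Fin n → Trop) × (Fin n → Trop) :=
  (fun j => if j ∈ Sset p m q ∧ j ∉ U then ⊥ else (if q j ≤ p j then p j else ⊥),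
   fun j => if p j < q j then q j else ⊥)

lemma BU_signed (p m q : Fin n → Trop) (U : Finset (Fin n)) (j : Fin n) :
    (BU p m q U).1 j = ⊥ ∨ (BU p m q U).2 j = ⊥ := by
  by_cases hqp : q j ≤ p j
  · right; simp [BU, not_lt.2 hqp]
  · left; simp [BU, hqp]

lemma AT_S_eq_BU_empty (p m q : Fin n → Trop) :
    AT p m q (Sset p m q) = BU p m q ∅ := by
  apply Prod.ext <;> funext j <;> by_cases hjS : j ∈ Sset p m q <;>
    simp [AT, BU, hjS]

lemma BU_insert_eq (p m q : Fin n → Trop) (U : Finset (Fin n)) (i : Fin n)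
    (h : ¬(i ∈ Sset p m q ∧ i ∉ U ∧ q i ≤ p i)) :
    BU p m q (insert i U) = BU p m q U := by
  apply Prod.ext
  · funext j
    by_cases hj : j = i
    · subst hj
      by_cases h2 : j ∈ Sset p m q ∧ j ∉ U
      · have hqp : ¬ q j ≤ p j := fun hc => h ⟨h2.1, h2.2, hc⟩
        simp [BU, h2, hqp, Finset.mem_insert]
      · simp [BU, h2, Finset.mem_insert]
    · simp [BU, Finset.mem_insert, hj]
  · rfl

lemma BU_mem (hR : IsSignedBendCone R) {p m q : Fin n → Trop}
    (hx : vee (p,m) ∈ R) (hy : vee (m,q) ∈ R) :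
    ∀ U : Finset (Fin n), BU p m q U ∈ R := by
  intro U
  induction U using Finset.induction_on with
  | empty =>
    rw [← AT_S_eq_BU_empty]
    exact AT_mem hR hx hy (Sset p m q) subset_rfl
  | @insert i U hiU ih =>
    by_cases hc : i ∈ Sset p m q ∧ i ∉ U ∧ q i ≤ p i
    · obtain ⟨hiS, hiU2, hqp⟩ := hc
      have hadd := hR.add_vee_mem _ ih _ (hR.pos_mem (deltaV i (p i)))
      have hadd' : vee ((BU p m q U).1 ⊔ deltaV i (p i),
          (BU p m q U).2 ⊔ (fun _ => (⊥:Trop))) ∈ R := hadd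
      have heq : vee ((BU p m q U).1 ⊔ deltaV i (p i),
          (BU p m q U).2 ⊔ (fun _ => (⊥:Trop))) = BU p m q (insert i U) := by
        apply Prod.ext <;> funext j <;>
          simp only [vee, Pi.sup_apply] <;>
          by_cases hj : j = i
        · subst hj
          simp [BU, hiS, hiU2, deltaV, not_lt.2 hqp, hqp, Finset.mem_insert]
        · have h1 : deltaV i (p i) j = ⊥ := by simp [deltaV, hj]
          have h2 : (BU p m q (insert i U)).1 j = (BU p m q U).1 j := by
            simp [BU, Finset.mem_insert, hj]
          rw [h1, sup_bot_eq, sup_bot_eq, h2]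
          exact signed_fix_1 (BU_signed p m q U j)
        · subst hj
          simp [BU, hiS, hiU2, deltaV, not_lt.2 hqp, hqp, Finset.mem_insert]
        · have h1 : deltaV i (p i) j = ⊥ := by simp [deltaV, hj]
          have h2 : (BU p m q (insert i U)).2 j = (BU p m q U).2 j := by
            simp [BU, Finset.mem_insert, hj]
          rw [h1, sup_bot_eq, sup_bot_eq, h2]
          exact signed_fix_2 (BU_signed p m q U j)
      rw [heq] at hadd'
      exact hadd'
    · rw [BU_insert_eq p m q U i hc]
      exact ih

lemma BU_univ_eq (p m q : Fin n → Trop) : BU p m q Finset.univ = vee (p, q) := by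
  apply Prod.ext <;> funext j
  · simp [BU, vee]
  · rfl

lemma trans_key (hR : IsSignedBendCone R) {p m q : Fin n → Trop}
    (hx : vee (p, m) ∈ R) (hy : vee (m, q) ∈ R) : vee (p, q) ∈ R := by
  rw [← BU_univ_eq p m q]
  exact BU_mem hR hx hy Finset.univ

end TransKey2
section Forward
variable {n : ℕ} {R : Set ((Fin n → Trop) × (Fin n → Trop))}

noncomputable def rsig (σ : Fin n → Bool) (f : (Fin n → Trop) × (Fin n → Trop)) :
    (Fin n → Trop) × (Fin n → Trop) :=
  (fun i => if σ i then f.1 i else ⊥, fun i => if σ i then ⊥ else f.2 i)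

def Esig (σ : Fin n → Bool) : Set ((Fin n → Trop) × (Fin n → Trop)) :=
  {f | ∀ i, if σ i then f.2 i ≤ f.1 i else f.1 i ≤ f.2 i}

lemma isClosed_Esig (σ : Fin n → Bool) : IsClosed (Esig σ) := by
  have : Esig σ = ⋂ i, {f : (Fin n → Trop) × (Fin n → Trop) |
      if σ i then f.2 i ≤ f.1 i else f.1 i ≤ f.2 i} := by
    ext f; simp [Esig, Set.mem_iInter]
  rw [this]
  apply isClosed_iInter
  intro i
  cases hσ : σ i
  · show IsClosed {f : (Fin n → Trop) × (Fin n → Trop) | f.1 i ≤ f.2 i}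
    have h1 : {f : (Fin n → Trop) × (Fin n → Trop) | f.1 i ≤ f.2 i}
        = (fun f : (Fin n → Trop) × (Fin n → Trop) => (f.1 i, f.2 i)) ⁻¹'
          {p : Trop × Trop | p.1 ≤ p.2} := rfl
    rw [h1]
    exact isClosed_le_trop.preimage
      (((continuous_apply i).comp continuous_fst).prodMk
        ((continuous_apply i).comp continuous_snd))
  · show IsClosed {f : (Fin n → Trop) × (Fin n → Trop) | f.2 i ≤ f.1 i}
    have h1 : {f : (Fin n → Trop) × (Fin n → Trop) | f.2 i ≤ f.1 i}
        = (fun f : (Fin n → Trop) × (Fin n → Trop) => (f.2 i, f.1 i)) ⁻¹'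
          {p : Trop × Trop | p.1 ≤ p.2} := rfl
    rw [h1]
    exact isClosed_le_trop.preimage
      (((continuous_apply i).comp continuous_snd).prodMk
        ((continuous_apply i).comp continuous_fst))

lemma continuous_rsig (σ : Fin n → Bool) : Continuous (rsig σ) := by
  apply Continuous.prodMk
  · apply continuous_pi
    intro i
    cases hσ : σ i
    · show Continuous fun _ : (Fin n → Trop) × (Fin n → Trop) => (⊥ : Trop)
      exact continuous_const
    · show Continuous fun f : (Fin n → Trop) × (Fin n → Trop) => f.1 i
      exact (continuous_apply i).comp continuous_fst
  · apply continuous_pi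
    intro i
    cases hσ : σ i
    · show Continuous fun f : (Fin n → Trop) × (Fin n → Trop) => f.2 i
      exact (continuous_apply i).comp continuous_snd
    · show Continuous fun _ : (Fin n → Trop) × (Fin n → Trop) => (⊥ : Trop)
      exact continuous_const

lemma promote_many (hR : IsSignedBendCone R) {f : (Fin n → Trop) × (Fin n → Trop)}
    {σ : Fin n → Bool} (hE : f ∈ Esig σ) (hr : rsig σ f ∈ R) : vee f ∈ R := by
  have claim : ∀ D : Finset (Fin n),
      ((fun i => if i ∈ D then (vee f).1 i else (rsig σ f).1 i,
        fun i => if i ∈ D then (vee f).2 i else (rsig σ f).2 i) :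
        (Fin n → Trop) × (Fin n → Trop)) ∈ R := by
    intro D
    induction D using Finset.induction_on with
    | empty => simpa using hr
    | @insert k D hkD ih =>
      have hEk := hE k
      cases hσ : σ k
      · replace hEk : f.1 k ≤ f.2 k := by simpa [hσ] using hEk
        by_cases htie : f.2 k ≤ f.1 k
        · -- tie: promote
          have heq2 : f.1 k = f.2 k := le_antisymm hEk htie
          have hprom := promote_coord hR ih k
          have heqP : (Function.update (fun i => if i ∈ D then (vee f).1 i
                else (rsig σ f).1 i) k
                ((if k ∈ D then (vee f).1 k else (rsig σ f).1 k) ⊔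
                 (if k ∈ D then (vee f).2 k else (rsig σ f).2 k)),
              Function.update (fun i => if i ∈ D then (vee f).2 i
                else (rsig σ f).2 i) k ⊥)
              = ((fun i => if i ∈ insert k D then (vee f).1 i else (rsig σ f).1 i,
                 fun i => if i ∈ insert k D then (vee f).2 i else (rsig σ f).2 i) :
                 (Fin n → Trop) × (Fin n → Trop)) := by
            apply Prod.ext <;> funext j <;> by_cases hj : j = k
            · subst hj
              simp [Function.update_self, hkD, rsig, hσ, vee, htie, heq2]
            · simp [Function.update_of_ne hj, Finset.mem_insert, hj]
            · subst hj
              simp [Function.update_self, vee, not_lt.2 htie]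
            · simp [Function.update_of_ne hj, Finset.mem_insert, hj]
          rw [← heqP]
          exact hprom
        · -- strict: rsig = vee at k
          have hlt : f.1 k < f.2 k := not_le.1 htie
          have heqP : ((fun i => if i ∈ insert k D then (vee f).1 i else (rsig σ f).1 i,
               fun i => if i ∈ insert k D then (vee f).2 i else (rsig σ f).2 i) :
               (Fin n → Trop) × (Fin n → Trop))
              = (fun i => if i ∈ D then (vee f).1 i else (rsig σ f).1 i,
                 fun i => if i ∈ D then (vee f).2 i else (rsig σ f).2 i) := by
            apply Prod.ext <;> funext j <;> by_cases hj : j = k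
            · subst hj; simp [hkD, vee, rsig, hσ, htie]
            · simp [Finset.mem_insert, hj]
            · subst hj; simp [hkD, vee, rsig, hσ, hlt]
            · simp [Finset.mem_insert, hj]
          rw [heqP]
          exact ih
      · replace hEk : f.2 k ≤ f.1 k := by simpa [hσ] using hEk
        have heqP : ((fun i => if i ∈ insert k D then (vee f).1 i else (rsig σ f).1 i,
             fun i => if i ∈ insert k D then (vee f).2 i else (rsig σ f).2 i) :
             (Fin n → Trop) × (Fin n → Trop))
            = (fun i => if i ∈ D then (vee f).1 i else (rsig σ f).1 i,
               fun i => if i ∈ D then (vee f).2 i else (rsig σ f).2 i) := by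
          apply Prod.ext <;> funext j <;> by_cases hj : j = k
          · subst hj; simp [hkD, vee, rsig, hσ, hEk]
          · simp [Finset.mem_insert, hj]
          · subst hj; simp [hkD, vee, rsig, hσ, not_lt.2 hEk]
          · simp [Finset.mem_insert, hj]
        rw [heqP]
        exact ih
  have := claim Finset.univ
  simpa using this

lemma isClosed_veePreimage (hR : IsSignedBendCone R) (hRc : IsClosed R) :
    IsClosed {f : (Fin n → Trop) × (Fin n → Trop) | vee f ∈ R} := by
  have hunion : {f : (Fin n → Trop) × (Fin n → Trop) | vee f ∈ R}
      = ⋃ σ : Fin n → Bool, (Esig σ ∩ rsig σ ⁻¹' R) := by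
    ext f
    constructor
    · intro hf
      refine Set.mem_iUnion.2 ⟨fun i => decide (f.2 i ≤ f.1 i), ?_, ?_⟩
      · intro i
        by_cases h : f.2 i ≤ f.1 i
        · simp [h]
        · simp [h, (not_le.1 h).le]
      · have hrv : rsig (fun i => decide (f.2 i ≤ f.1 i)) f = vee f := by
          apply Prod.ext <;> funext i <;>
            simp only [rsig, vee, decide_eq_true_eq]
          by_cases h : f.2 i ≤ f.1 i
          · simp [h, not_lt.2 h]
          · simp [h, not_le.1 h]
        rw [Set.mem_preimage, hrv]
        exact hf
    · intro hf
      obtain ⟨σ, hE, hr⟩ := Set.mem_iUnion.1 hf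
      exact promote_many hR hE hr
  rw [hunion]
  apply isClosed_iUnion_of_finite
  intro σ
  exact (isClosed_Esig σ).inter (hRc.preimage (continuous_rsig σ))

lemma forward_direction (hR : IsSignedBendCone R) (hRc : IsClosed R) :
    ∃ C : Set ((Fin n → Trop) × (Fin n → Trop)),
      IsMonotonePrecongruence C ∧ IsClosed C ∧ R = signedPart C := by
  refine ⟨{f | vee f ∈ R}, ⟨?_, ?_, ?_, ?_⟩, isClosed_veePreimage hR hRc, ?_⟩
  · intro f hf l
    show vee (tsmul l f.1, tsmul l f.2) ∈ R
    rw [vee_tsmul]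
    exact hR.smul_mem _ hf l
  · intro f hf g hg
    show vee (f.1 ⊔ g.1, f.2 ⊔ g.2) ∈ R
    rw [← vee_sup_vee]
    exact hR.add_vee_mem _ hf _ hg
  · intro f hf g hg hfg
    show vee (f.1, g.2) ∈ R
    have hx : vee (f.1, f.2) ∈ R := by
      have : ((f.1, f.2) : (Fin n → Trop) × (Fin n → Trop)) = f := rfl
      rw [this]; exact hf
    have hy : vee (f.2, g.2) ∈ R := by
      rw [hfg]
      have : ((g.1, g.2) : (Fin n → Trop) × (Fin n → Trop)) = g := rfl
      rw [this]; exact hg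
    exact trans_key hR hx hy
  · intro f hfle
    show vee f ∈ R
    have hv : vee f = (f.1, fun _ => (⊥:Trop)) := by
      apply Prod.ext <;> funext i
      · exact if_pos (hfle i)
      · exact if_neg (not_lt.2 (hfle i))
    rw [hv]
    exact hR.pos_mem f.1
  · ext x
    constructor
    · intro hx
      exact ⟨by rw [Set.mem_setOf_eq, vee_eq_self (hR.signed x hx)]; exact hx,
        hR.signed x hx⟩
    · rintro ⟨hx, hsx⟩
      rw [Set.mem_setOf_eq, vee_eq_self hsx] at hx
      exact hx

end Forward

/-- R is a closed signed bend cone iff R is the signed part of some closed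
monotone pre-congruence. -/
theorem closed_signedBendCone_iff_signedPart {n : ℕ}
    (R : Set ((Fin n → Trop) × (Fin n → Trop))) :
    (IsSignedBendCone R ∧ IsClosed R) ↔
      ∃ C : Set ((Fin n → Trop) × (Fin n → Trop)),
        IsMonotonePrecongruence C ∧ IsClosed C ∧ R = signedPart C := by
  constructor
  · rintro ⟨hR, hRc⟩
    exact forward_direction hR hRc
  · rintro ⟨C, hC, hCc, hRC⟩
    rw [hRC]
    exact ⟨(backward_direction hC hCc).1, (backward_direction hC hCc).2⟩
end
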